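/- Assume P, H, V, Θ and Ô are as in the context, assume the generic-points property (for every h ∈ H and v ∈ V with h ∩ v ≠ ∅ there exists a point of h ∩ v belonging to no member of H ∪ V other than h and v), and assume ôrad ≥ 3, where ôrad is the minimum over vertices i of Θ of the maximum over vertices j of Ô(i,j). Then there exists a point p ∈ P such that rld(p,q) ≤ ôrad − 1 for every q ∈ P; consequently rad(P) ≤ ôrad − 1. -/

import Mathlib

/-- A segment with endpoints `p` and `q` is axis-parallel: horizontal (equal
`y`-coordinates) or vertical (equal `x`-coordinates). -/
def AxisParallel (p q : ℝ × ℝ) : Prop := p.2 = q.2 ∨ p.1 = q.1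

/-- `f` describes a rectilinear path from `p` to `q` in `P` with `k ≥ 1` links:
`f 0 = p`, `f k = q`, and each closed segment from `f t` to `f (t+1)` is contained
in `P` and is axis-parallel. -/
def IsRectPath (P : Set (ℝ × ℝ)) (p q : ℝ × ℝ) (k : ℕ) (f : ℕ → ℝ × ℝ) : Prop :=
  1 ≤ k ∧ f 0 = p ∧ f k = q ∧
    ∀ t < k, segment ℝ (f t) (f (t + 1)) ⊆ P ∧ AxisParallel (f t) (f (t + 1))

/-- The rectilinear link distance: the minimum link length of a rectilinear path
from `p` to `q` in `P`. -/
noncomputable def rld (P : Set (ℝ × ℝ)) (p q : ℝ × ℝ) : ℕ :=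
  sInf {k : ℕ | ∃ f : ℕ → ℝ × ℝ, IsRectPath P p q k f}

/-- A box: a closed axis-aligned rectangle `[a,b] × [c,d]` with `a < b` and `c < d`. -/
def IsBox (B : Set (ℝ × ℝ)) : Prop :=
  ∃ a b c d : ℝ, a < b ∧ c < d ∧ B = Set.Icc a b ×ˢ Set.Icc c d

/-- The graph of oriented distances `Θ`: the bipartite graph on the (disjoint) union of
the families `H` and `V`, with an edge between `h ∈ H` and `v ∈ V` exactly when
`h ∩ v ≠ ∅`. -/
def thetaGraph (H V : Set (Set (ℝ × ℝ))) :
    SimpleGraph {B : Set (ℝ × ℝ) // B ∈ H ∪ V} where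
  Adj x y := x ≠ y ∧
    ((x.1 ∈ H ∧ y.1 ∈ V) ∨ (x.1 ∈ V ∧ y.1 ∈ H)) ∧ (x.1 ∩ y.1).Nonempty
  symm := by
    constructor
    rintro x y ⟨hxy, hor, hne⟩
    refine ⟨hxy.symm, ?_, by rwa [Set.inter_comm]⟩
    rcases hor with ⟨h1, h2⟩ | ⟨h1, h2⟩
    · exact Or.inr ⟨h2, h1⟩
    · exact Or.inl ⟨h2, h1⟩
  loopless := by constructor; rintro x ⟨hxx, -⟩; exact hxx rfl

/-- The oriented distance `Ô(i,j)`: the graph distance in `Θ` plus one. -/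
noncomputable def oDist (H V : Set (Set (ℝ × ℝ)))
    (i j : {B : Set (ℝ × ℝ) // B ∈ H ∪ V}) : ℕ :=
  (thetaGraph H V).dist i j + 1

/-- `H` and `V` form a good decomposition of `P`: they are finite families of boxes
contained in `P`; every horizontal (resp. vertical) segment contained in `P` lies in
some member of `H` (resp. `V`); for `h ∈ H` and `v ∈ V` meeting each other, `h ∩ v`
is the product of the `x`-projection of `v` with the `y`-projection of `h`; and the
graph of oriented distances is connected. -/
structure GoodDecomp (P : Set (ℝ × ℝ)) (H V : Set (Set (ℝ × ℝ))) : Prop where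
  finH : H.Finite
  finV : V.Finite
  box : ∀ B ∈ H ∪ V, IsBox B
  sub : ∀ B ∈ H ∪ V, B ⊆ P
  covH : ∀ p q : ℝ × ℝ, p.2 = q.2 → segment ℝ p q ⊆ P → ∃ h ∈ H, segment ℝ p q ⊆ h
  covV : ∀ p q : ℝ × ℝ, p.1 = q.1 → segment ℝ p q ⊆ P → ∃ v ∈ V, segment ℝ p q ⊆ v
  cross : ∀ h ∈ H, ∀ v ∈ V, (h ∩ v).Nonempty →
    h ∩ v = (Prod.fst '' v) ×ˢ (Prod.snd '' h)
  conn : (thetaGraph H V).Connected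

/-- `ôrad`: the minimum over vertices `i` of `Θ` of the maximum over vertices `j` of
`Ô(i,j)`. -/
noncomputable def oRadTheta (H V : Set (Set (ℝ × ℝ))) : ℕ :=
  sInf {m : ℕ | ∃ i : {B : Set (ℝ × ℝ) // B ∈ H ∪ V},
    sSup {n : ℕ | ∃ j : {B : Set (ℝ × ℝ) // B ∈ H ∪ V}, oDist H V i j = n} = m}

/-- `rad(P)`: the infimum over `p ∈ P` of the supremum over `q ∈ P` of `rld(p,q)`. -/
noncomputable def rldRad (P : Set (ℝ × ℝ)) : ℕ :=
  sInf {m : ℕ | ∃ p ∈ P, sSup {n : ℕ | ∃ q ∈ P, rld P p q = n} = m}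

section Helpers

open Set

lemma IsBox.convex {B : Set (ℝ × ℝ)} (hB : IsBox B) : Convex ℝ B := by
  obtain ⟨a, b, c, d, -, -, rfl⟩ := hB
  exact (convex_Icc a b).prod (convex_Icc c d)

lemma IsBox.closed {B : Set (ℝ × ℝ)} (hB : IsBox B) : IsClosed B := by
  obtain ⟨a, b, c, d, -, -, rfl⟩ := hB
  exact isClosed_Icc.prod isClosed_Icc

lemma IsBox.nonempty {B : Set (ℝ × ℝ)} (hB : IsBox B) : B.Nonempty := by
  obtain ⟨a, b, c, d, hab, hcd, rfl⟩ := hB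
  exact (nonempty_Icc.2 hab.le).prod (nonempty_Icc.2 hcd.le)

lemma IsBox.eq_proj {B : Set (ℝ × ℝ)} (hB : IsBox B) :
    B = (Prod.fst '' B) ×ˢ (Prod.snd '' B) := by
  obtain ⟨a, b, c, d, hab, hcd, rfl⟩ := hB
  rw [Set.fst_image_prod _ (nonempty_Icc.2 hcd.le),
    Set.snd_image_prod (nonempty_Icc.2 hab.le)]

lemma mem_box_of_proj {B : Set (ℝ × ℝ)} (hB : IsBox B) {x y : ℝ}
    (hx : x ∈ Prod.fst '' B) (hy : y ∈ Prod.snd '' B) : (x, y) ∈ B := by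
  rw [hB.eq_proj]; exact ⟨hx, hy⟩

lemma rectPath_prepend {P : Set (ℝ × ℝ)} {p p' q : ℝ × ℝ} {k : ℕ} {f : ℕ → ℝ × ℝ}
    (hf : IsRectPath P p' q k f) (hs : segment ℝ p p' ⊆ P) (ha : AxisParallel p p') :
    IsRectPath P p q (k + 1) (fun t => if t = 0 then p else f (t - 1)) := by
  obtain ⟨hk, h0, hk', hseg⟩ := hf
  refine ⟨by omega, rfl, ?_, ?_⟩
  · simp only [Nat.add_sub_cancel, if_neg (Nat.succ_ne_zero k)]
    exact hk'
  · intro t ht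
    rcases Nat.eq_zero_or_pos t with rfl | htpos
    · simpa [h0] using ⟨hs, ha⟩
    · have e1 : (if t = 0 then p else f (t - 1)) = f (t - 1) := if_neg (by omega)
      have e2 : (if t + 1 = 0 then p else f (t + 1 - 1)) = f t := by
        rw [if_neg (Nat.succ_ne_zero t)]
        congr 1
      have h3 := hseg (t - 1) (by omega)
      have e3 : t - 1 + 1 = t := by omega
      rw [e3] at h3
      simpa [e1, e2] using h3

lemma rectPath_two {P A B : Set (ℝ × ℝ)} (hA : Convex ℝ A) (hB : Convex ℝ B)
    (hAP : A ⊆ P) (hBP : B ⊆ P) {p mid q : ℝ × ℝ}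
    (hp : p ∈ A) (hmA : mid ∈ A) (hmB : mid ∈ B) (hq : q ∈ B)
    (a1 : AxisParallel p mid) (a2 : AxisParallel mid q) :
    ∃ f, IsRectPath P p q 2 f := by
  refine ⟨fun t => if t = 0 then p else if t = 1 then mid else q,
    one_le_two, rfl, by norm_num, ?_⟩
  intro t ht
  interval_cases t
  · simpa using ⟨fun z hz => hAP (hA.segment_subset hp hmA hz), a1⟩
  · simpa using ⟨fun z hz => hBP (hB.segment_subset hmB hq hz), a2⟩

variable {P : Set (ℝ × ℝ)} {H V : Set (Set (ℝ × ℝ))}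

lemma path_of_walk (hgood : GoodDecomp P H V) :
    ∀ {u w : {B : Set (ℝ × ℝ) // B ∈ H ∪ V}} (W : (thetaGraph H V).Walk u w),
      1 ≤ W.length → ∀ p ∈ u.1, ∀ q ∈ w.1, ∃ f, IsRectPath P p q (W.length + 1) f := by
  intro u w W
  induction W with
  | nil => intro h; simp at h
  | @cons u m w e W' ih =>
    intro _ p hp q hq
    have hbu : IsBox u.1 := hgood.box _ u.2
    have hbm : IsBox m.1 := hgood.box _ m.2
    obtain ⟨-, hor, hne⟩ := e
    rcases Nat.eq_zero_or_pos W'.length with h0 | hpos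
    · have hmw : m = w := SimpleGraph.Walk.eq_of_length_eq_zero h0
      subst hmw
      show ∃ f, IsRectPath P p q (W'.length + 1 + 1) f; rw [h0]
      rcases hor with ⟨huH, hmV⟩ | ⟨huV, hmH⟩
      · have hcr := hgood.cross _ huH _ hmV hne
        have hmid : ((q.1, p.2) : ℝ × ℝ) ∈ u.1 ∩ m.1 := by
          rw [hcr]; exact ⟨⟨q, hq, rfl⟩, ⟨p, hp, rfl⟩⟩
        exact rectPath_two hbu.convex hbm.convex (hgood.sub _ u.2) (hgood.sub _ m.2)
          hp hmid.1 hmid.2 hq (Or.inl rfl) (Or.inr rfl)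
      · have hcr := hgood.cross _ hmH _ huV (by rwa [Set.inter_comm] at hne)
        have hmid : ((p.1, q.2) : ℝ × ℝ) ∈ m.1 ∩ u.1 := by
          rw [hcr]; exact ⟨⟨p, hp, rfl⟩, ⟨q, hq, rfl⟩⟩
        exact rectPath_two hbu.convex hbm.convex (hgood.sub _ u.2) (hgood.sub _ m.2)
          hp hmid.2 hmid.1 hq (Or.inr rfl) (Or.inl rfl)
    · obtain ⟨p', hp'um, haxis⟩ : ∃ p', p' ∈ u.1 ∩ m.1 ∧ AxisParallel p p' := by
        rcases hor with ⟨huH, hmV⟩ | ⟨huV, hmH⟩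
        · have hcr := hgood.cross _ huH _ hmV hne
          obtain ⟨x, hx⟩ := hbm.nonempty.image Prod.fst
          exact ⟨(x, p.2), by rw [hcr]; exact ⟨hx, ⟨p, hp, rfl⟩⟩, Or.inl rfl⟩
        · have hcr := hgood.cross _ hmH _ huV (by rwa [Set.inter_comm] at hne)
          obtain ⟨y, hy⟩ := hbm.nonempty.image Prod.snd
          exact ⟨(p.1, y), by rw [Set.inter_comm, hcr]; exact ⟨⟨p, hp, rfl⟩, hy⟩,
            Or.inr rfl⟩
      obtain ⟨f, hf⟩ := ih hpos p' hp'um.2 q hq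
      have hseg : segment ℝ p p' ⊆ P :=
        fun z hz => hgood.sub _ u.2 (hbu.convex.segment_subset hp hp'um.1 hz)
      show ∃ f, IsRectPath P p q (W'.length + 1 + 1) f
      exact ⟨_, rectPath_prepend hf hseg haxis⟩

lemma walk_parity (hdisj : ∀ B ∈ H, B ∉ V) {u w : {B : Set (ℝ × ℝ) // B ∈ H ∪ V}}
    (W : (thetaGraph H V).Walk u w) : ((u.1 ∈ V) ↔ (w.1 ∈ V)) ↔ Even W.length := by
  induction W with
  | nil => simp
  | @cons u m w e W' ih =>
    obtain ⟨-, hor, -⟩ := e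
    have hflip : (u.1 ∈ V) ↔ ¬ (m.1 ∈ V) := by
      rcases hor with ⟨h1, h2⟩ | ⟨h1, h2⟩
      · exact iff_of_false (hdisj _ h1) (not_not_intro h2)
      · exact iff_of_true h1 (hdisj _ h2)
    show _ ↔ Even (W'.length + 1); rw [Nat.even_add_one, ← ih]
    tauto

lemma mixed_eq (hgood : GoodDecomp P H V) {X Y : Set (ℝ × ℝ)}
    (hXH : X ∈ H) (hXV : X ∈ V) (hYH : Y ∈ H) (hYV : Y ∈ V)
    (hne : (Y ∩ X).Nonempty) : Y = X := by
  have hbX := hgood.box X (Or.inl hXH)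
  have hbY := hgood.box Y (Or.inl hYH)
  have h1 := hgood.cross Y hYH X hXV hne
  have h2 := hgood.cross X hXH Y hYV (by rwa [Set.inter_comm] at hne)
  have hE : (Prod.fst '' X) ×ˢ (Prod.snd '' Y) = (Prod.fst '' Y) ×ˢ (Prod.snd '' X) := by
    rw [← h1, ← h2, Set.inter_comm]
  have hfst : Prod.fst '' X = Prod.fst '' Y := by
    apply Set.Subset.antisymm
    · intro x hx
      obtain ⟨y, hy⟩ := hbY.nonempty.image Prod.snd
      have hm : (x, y) ∈ (Prod.fst '' Y) ×ˢ (Prod.snd '' X) := by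
        rw [← hE]; exact ⟨hx, hy⟩
      exact hm.1
    · intro x hx
      obtain ⟨y, hy⟩ := hbX.nonempty.image Prod.snd
      have hm : (x, y) ∈ (Prod.fst '' X) ×ˢ (Prod.snd '' Y) := by
        rw [hE]; exact ⟨hx, hy⟩
      exact hm.1
  have hsnd : Prod.snd '' X = Prod.snd '' Y := by
    apply Set.Subset.antisymm
    · intro y hy
      obtain ⟨x, hx⟩ := hbY.nonempty.image Prod.fst
      have hm : (x, y) ∈ (Prod.fst '' X) ×ˢ (Prod.snd '' Y) := by
        rw [hE]; exact ⟨hx, hy⟩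
      exact hm.2
    · intro y hy
      obtain ⟨x, hx⟩ := hbX.nonempty.image Prod.fst
      have hm : (x, y) ∈ (Prod.fst '' Y) ×ˢ (Prod.snd '' X) := by
        rw [← hE]; exact ⟨hx, hy⟩
      exact hm.2
  rw [hbY.eq_proj, hbX.eq_proj, hfst, hsnd]

lemma no_tri (hgood : GoodDecomp P H V)
    (hgen : ∀ h ∈ H, ∀ v ∈ V, (h ∩ v).Nonempty →
      ∃ x ∈ h ∩ v, ∀ B ∈ H ∪ V, x ∈ B → B = h ∨ B = v)
    {X h v : Set (ℝ × ℝ)}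
    (hXH : X ∈ H) (hXV : X ∈ V)
    (hhH : h ∈ H) (hhV : h ∉ V) (hneh : (h ∩ X).Nonempty)
    (hvV : v ∈ V) (hvH : v ∉ H) (hnev : (v ∩ X).Nonempty) : False := by
  have hbX := hgood.box X (Or.inl hXH)
  have hbh := hgood.box h (Or.inl hhH)
  have hbv := hgood.box v (Or.inr hvV)
  have c1 := hgood.cross h hhH X hXV hneh
  have c2 := hgood.cross X hXH v hvV (by rwa [Set.inter_comm] at hnev)
  have hXh : Prod.fst '' X ⊆ Prod.fst '' h := by
    intro x hx; obtain ⟨y, hy⟩ := hbh.nonempty.image Prod.snd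
    have hm : (x, y) ∈ h ∩ X := by rw [c1]; exact ⟨hx, hy⟩
    exact ⟨_, hm.1, rfl⟩
  have hhX : Prod.snd '' h ⊆ Prod.snd '' X := by
    intro y hy; obtain ⟨x, hx⟩ := hbX.nonempty.image Prod.fst
    have hm : (x, y) ∈ h ∩ X := by rw [c1]; exact ⟨hx, hy⟩
    exact ⟨_, hm.2, rfl⟩
  have hvX : Prod.fst '' v ⊆ Prod.fst '' X := by
    intro x hx; obtain ⟨y, hy⟩ := hbX.nonempty.image Prod.snd
    have hm : (x, y) ∈ X ∩ v := by rw [c2]; exact ⟨hx, hy⟩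
    exact ⟨_, hm.1, rfl⟩
  have hXv : Prod.snd '' X ⊆ Prod.snd '' v := by
    intro y hy; obtain ⟨x, hx⟩ := hbv.nonempty.image Prod.fst
    have hm : (x, y) ∈ X ∩ v := by rw [c2]; exact ⟨hx, hy⟩
    exact ⟨_, hm.2, rfl⟩
  obtain ⟨x₀, hx₀⟩ := hbv.nonempty.image Prod.fst
  obtain ⟨y₀, hy₀⟩ := hbh.nonempty.image Prod.snd
  have hmem : (x₀, y₀) ∈ h ∩ v :=
    ⟨mem_box_of_proj hbh (hXh (hvX hx₀)) hy₀,
     mem_box_of_proj hbv hx₀ (hXv (hhX hy₀))⟩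
  have c3 := hgood.cross h hhH v hvV ⟨_, hmem⟩
  have hsubX : h ∩ v ⊆ X := by
    rw [c3]; intro z hz
    have := mem_box_of_proj hbX (hvX hz.1) (hhX hz.2)
    simpa using this
  obtain ⟨x, hxhv, hxonly⟩ := hgen h hhH v hvV ⟨_, hmem⟩
  rcases hxonly X (Or.inl hXH) (hsubX hxhv) with rfl | rfl
  · exact hhV hXV
  · exact hvH hXH

lemma mem_of_limit {W : Set (ℝ × ℝ)} (hW : IsClosed W) (g : ℝ → ℝ × ℝ) (hg : Continuous g)
    {s : Set ℝ} {t : ℝ} (ht : t ∈ closure s) (h : ∀ x ∈ s, g x ∈ W) : g t ∈ W :=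
  closure_minimal h (hW.preimage hg) ht

lemma neighbor_subset_H (hgood : GoodDecomp P H V) {X h : Set (ℝ × ℝ)}
    (hXH : X ∈ H) (hXV : X ∈ V) (hhH : h ∈ H) (hne : (h ∩ X).Nonempty)
    (honly : ∀ v ∈ V, (v ∩ X).Nonempty → v = X) : h ⊆ X := by
  obtain ⟨a, b, c, d, hab, hcd, hXr⟩ := hgood.box X (Or.inl hXH)
  obtain ⟨a', b', c', d', hab', hcd', hhr⟩ := hgood.box h (Or.inl hhH)
  have c1 := hgood.cross h hhH X hXV hne
  have e1 : Prod.fst '' X = Set.Icc a b := by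
    rw [hXr, Set.fst_image_prod _ (Set.nonempty_Icc.2 hcd.le)]
  have e2 : Prod.snd '' h = Set.Icc c' d' := by
    rw [hhr, Set.snd_image_prod (Set.nonempty_Icc.2 hab'.le)]
  rw [e1, e2] at c1
  have hxsub : Set.Icc a b ⊆ Set.Icc a' b' := by
    intro x hx
    have hm : (x, c') ∈ h ∩ X := by rw [c1]; exact ⟨hx, ⟨le_refl c', hcd'.le⟩⟩
    have := hm.1; rw [hhr] at this; exact this.1
  have hysub : Set.Icc c' d' ⊆ Set.Icc c d := by
    intro y hy
    have hm : (a, y) ∈ h ∩ X := by rw [c1]; exact ⟨⟨le_refl a, hab.le⟩, hy⟩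
    have := hm.2; rw [hXr] at this; exact this.2
  have ha' : a' ≤ a := (hxsub ⟨le_refl a, hab.le⟩).1
  have hb' : b ≤ b' := (hxsub ⟨hab.le, le_refl b⟩).2
  have hc' : c ≤ c' := (hysub ⟨le_refl c', hcd'.le⟩).1
  have hd' : d' ≤ d := (hysub ⟨hcd'.le, le_refl d'⟩).2
  have hWcl : IsClosed (⋃ v ∈ {v : Set (ℝ × ℝ) | v ∈ V ∧ v ∩ X = ∅}, v) := by
    apply Set.Finite.isClosed_biUnion (hgood.finV.subset (fun v hv => hv.1))
    intro v hv
    exact (hgood.box v (Or.inr hv.1)).closed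
  have hcov : ∀ z : ℝ × ℝ, z ∈ h → z ∉ X →
      z ∈ ⋃ v ∈ {v : Set (ℝ × ℝ) | v ∈ V ∧ v ∩ X = ∅}, v := by
    intro z hzh hzX
    have hzP : z ∈ P := hgood.sub h (Or.inl hhH) hzh
    obtain ⟨v, hvV, hvz⟩ := hgood.covV z z rfl
      (by rw [segment_same]; simpa using hzP)
    have hzv : z ∈ v := hvz (left_mem_segment ℝ z z)
    have hvX : v ∩ X = ∅ := by
      by_contra hne'
      have := honly v hvV (Set.nonempty_iff_ne_empty.2 hne')
      exact hzX (this ▸ hzv)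
    exact Set.mem_biUnion ⟨hvV, hvX⟩ hzv
  have hnotX : ∀ z : ℝ × ℝ, z ∈ ⋃ v ∈ {v : Set (ℝ × ℝ) | v ∈ V ∧ v ∩ X = ∅}, v →
      z ∉ X := by
    intro z hz hzX
    simp only [Set.mem_iUnion] at hz
    obtain ⟨v, ⟨hvV, hvX⟩, hzv⟩ := hz
    exact Set.eq_empty_iff_forall_notMem.1 hvX z ⟨hzv, hzX⟩
  have hbb : b' ≤ b := by
    by_contra hlt
    push_neg at hlt
    have hlim : ((b, c') : ℝ × ℝ) ∈ ⋃ v ∈ {v : Set (ℝ × ℝ) | v ∈ V ∧ v ∩ X = ∅}, v := by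
      refine mem_of_limit hWcl (fun t => (t, c')) (continuous_id.prodMk continuous_const)
        (s := Set.Ioc b b') (t := b) ?_ ?_
      · rw [closure_Ioc hlt.ne]; exact ⟨le_refl b, hlt.le⟩
      · intro x hx
        refine hcov _ ?_ ?_
        · rw [hhr]
          exact ⟨⟨ha'.trans (hab.le.trans hx.1.le), hx.2⟩, ⟨le_refl c', hcd'.le⟩⟩
        · rw [hXr]; rintro ⟨⟨-, hxb⟩, -⟩; exact absurd hxb (not_le.2 hx.1)
    refine hnotX _ hlim ?_
    rw [hXr]
    exact ⟨⟨hab.le, le_refl b⟩, ⟨hc', hcd'.le.trans hd'⟩⟩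
  have haa : a ≤ a' := by
    by_contra hlt
    push_neg at hlt
    have hlim : ((a, c') : ℝ × ℝ) ∈ ⋃ v ∈ {v : Set (ℝ × ℝ) | v ∈ V ∧ v ∩ X = ∅}, v := by
      refine mem_of_limit hWcl (fun t => (t, c')) (continuous_id.prodMk continuous_const)
        (s := Set.Ico a' a) (t := a) ?_ ?_
      · rw [closure_Ico hlt.ne]; exact ⟨hlt.le, le_refl a⟩
      · intro x hx
        refine hcov _ ?_ ?_
        · rw [hhr]
          exact ⟨⟨hx.1, (hx.2.le.trans hab.le).trans hb'⟩, ⟨le_refl c', hcd'.le⟩⟩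
        · rw [hXr]; rintro ⟨⟨hax, -⟩, -⟩; exact absurd hax (not_le.2 hx.2)
    refine hnotX _ hlim ?_
    rw [hXr]
    exact ⟨⟨le_refl a, hab.le⟩, ⟨hc', hcd'.le.trans hd'⟩⟩
  intro z hz
  rw [hhr] at hz; rw [hXr]
  exact ⟨⟨haa.trans hz.1.1, hz.1.2.trans hbb⟩, ⟨hc'.trans hz.2.1, hz.2.2.trans hd'⟩⟩

lemma neighbor_subset_V (hgood : GoodDecomp P H V) {X v : Set (ℝ × ℝ)}
    (hXH : X ∈ H) (hXV : X ∈ V) (hvV : v ∈ V) (hne : (v ∩ X).Nonempty)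
    (honly : ∀ h ∈ H, (h ∩ X).Nonempty → h = X) : v ⊆ X := by
  obtain ⟨a, b, c, d, hab, hcd, hXr⟩ := hgood.box X (Or.inl hXH)
  obtain ⟨a', b', c', d', hab', hcd', hvr⟩ := hgood.box v (Or.inr hvV)
  have c1 := hgood.cross X hXH v hvV (by rwa [Set.inter_comm] at hne)
  have e1 : Prod.fst '' v = Set.Icc a' b' := by
    rw [hvr, Set.fst_image_prod _ (Set.nonempty_Icc.2 hcd'.le)]
  have e2 : Prod.snd '' X = Set.Icc c d := by
    rw [hXr, Set.snd_image_prod (Set.nonempty_Icc.2 hab.le)]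
  rw [e1, e2] at c1
  have hxsub : Set.Icc a' b' ⊆ Set.Icc a b := by
    intro x hx
    have hm : (x, c) ∈ X ∩ v := by rw [c1]; exact ⟨hx, ⟨le_refl c, hcd.le⟩⟩
    have := hm.1; rw [hXr] at this; exact this.1
  have hysub : Set.Icc c d ⊆ Set.Icc c' d' := by
    intro y hy
    have hm : (a', y) ∈ X ∩ v := by rw [c1]; exact ⟨⟨le_refl a', hab'.le⟩, hy⟩
    have := hm.2; rw [hvr] at this; exact this.2
  have ha' : a ≤ a' := (hxsub ⟨le_refl a', hab'.le⟩).1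
  have hb' : b' ≤ b := (hxsub ⟨hab'.le, le_refl b'⟩).2
  have hc' : c' ≤ c := (hysub ⟨le_refl c, hcd.le⟩).1
  have hd' : d ≤ d' := (hysub ⟨hcd.le, le_refl d⟩).2
  have hWcl : IsClosed (⋃ h ∈ {h : Set (ℝ × ℝ) | h ∈ H ∧ h ∩ X = ∅}, h) := by
    apply Set.Finite.isClosed_biUnion (hgood.finH.subset (fun h hh => hh.1))
    intro h hh
    exact (hgood.box h (Or.inl hh.1)).closed
  have hcov : ∀ z : ℝ × ℝ, z ∈ v → z ∉ X →
      z ∈ ⋃ h ∈ {h : Set (ℝ × ℝ) | h ∈ H ∧ h ∩ X = ∅}, h := by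
    intro z hzv hzX
    have hzP : z ∈ P := hgood.sub v (Or.inr hvV) hzv
    obtain ⟨h, hhH, hhz⟩ := hgood.covH z z rfl
      (by rw [segment_same]; simpa using hzP)
    have hzh : z ∈ h := hhz (left_mem_segment ℝ z z)
    have hhX : h ∩ X = ∅ := by
      by_contra hne'
      have := honly h hhH (Set.nonempty_iff_ne_empty.2 hne')
      exact hzX (this ▸ hzh)
    exact Set.mem_biUnion ⟨hhH, hhX⟩ hzh
  have hnotX : ∀ z : ℝ × ℝ, z ∈ ⋃ h ∈ {h : Set (ℝ × ℝ) | h ∈ H ∧ h ∩ X = ∅}, h →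
      z ∉ X := by
    intro z hz hzX
    simp only [Set.mem_iUnion] at hz
    obtain ⟨h, ⟨hhH, hhX⟩, hzh⟩ := hz
    exact Set.eq_empty_iff_forall_notMem.1 hhX z ⟨hzh, hzX⟩
  have hdd : d' ≤ d := by
    by_contra hlt
    push_neg at hlt
    have hlim : ((a', d) : ℝ × ℝ) ∈ ⋃ h ∈ {h : Set (ℝ × ℝ) | h ∈ H ∧ h ∩ X = ∅}, h := by
      refine mem_of_limit hWcl (fun t => (a', t)) (continuous_const.prodMk continuous_id)
        (s := Set.Ioc d d') (t := d) ?_ ?_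
      · rw [closure_Ioc hlt.ne]; exact ⟨le_refl d, hlt.le⟩
      · intro y hy
        refine hcov _ ?_ ?_
        · rw [hvr]
          exact ⟨⟨le_refl a', hab'.le⟩, ⟨hc'.trans (hcd.le.trans hy.1.le), hy.2⟩⟩
        · rw [hXr]; rintro ⟨-, ⟨-, hyd⟩⟩; exact absurd hyd (not_le.2 hy.1)
    refine hnotX _ hlim ?_
    rw [hXr]
    exact ⟨⟨ha', hb'.trans'  hab'.le⟩, ⟨hcd.le, le_refl d⟩⟩
  have hcc : c ≤ c' := by
    by_contra hlt
    push_neg at hlt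
    have hlim : ((a', c) : ℝ × ℝ) ∈ ⋃ h ∈ {h : Set (ℝ × ℝ) | h ∈ H ∧ h ∩ X = ∅}, h := by
      refine mem_of_limit hWcl (fun t => (a', t)) (continuous_const.prodMk continuous_id)
        (s := Set.Ico c' c) (t := c) ?_ ?_
      · rw [closure_Ico hlt.ne]; exact ⟨hlt.le, le_refl c⟩
      · intro y hy
        refine hcov _ ?_ ?_
        · rw [hvr]
          exact ⟨⟨le_refl a', hab'.le⟩, ⟨hy.1, (hy.2.le.trans hcd.le).trans hd'⟩⟩
        · rw [hXr]; rintro ⟨-, ⟨hcy, -⟩⟩; exact absurd hcy (not_le.2 hy.2)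
    refine hnotX _ hlim ?_
    rw [hXr]
    exact ⟨⟨ha', hb'.trans' hab'.le⟩, ⟨le_refl c, hcd.le⟩⟩
  intro z hz
  rw [hvr] at hz; rw [hXr]
  exact ⟨⟨ha'.trans hz.1.1, hz.1.2.trans hb'⟩, ⟨hcc.trans hz.2.1, hz.2.2.trans hdd⟩⟩
lemma no_mixed (hgood : GoodDecomp P H V)
    (hgen : ∀ h ∈ H, ∀ v ∈ V, (h ∩ v).Nonempty →
      ∃ x ∈ h ∩ v, ∀ B ∈ H ∪ V, x ∈ B → B = h ∨ B = v)
    (hbig : ∀ i : {B : Set (ℝ × ℝ) // B ∈ H ∪ V},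
      ∃ j, 2 ≤ (thetaGraph H V).dist i j) :
    ∀ B ∈ H, B ∉ V := by
  intro X hXH hXV
  obtain ⟨j, hj⟩ := hbig ⟨X, Or.inl hXH⟩
  have hNBR : ∀ m : {B : Set (ℝ × ℝ) // B ∈ H ∪ V},
      (thetaGraph H V).Adj ⟨X, Or.inl hXH⟩ m → m.1 ⊆ X := by
    intro m hadj
    obtain ⟨hnem, hor, hne⟩ := hadj
    have hmX : m.1 ≠ X := fun e => hnem (Subtype.ext e).symm
    have hneMX : (m.1 ∩ X).Nonempty := by
      obtain ⟨z, hz⟩ := hne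
      exact ⟨z, hz.2, hz.1⟩
    by_cases hmV : m.1 ∈ V
    · by_cases hmH : m.1 ∈ H
      · exact absurd (mixed_eq hgood hXH hXV hmH hmV hneMX) hmX
      · have honlyH : ∀ h' ∈ H, (h' ∩ X).Nonempty → h' = X := by
          intro h' hh' hne'
          by_cases hh'V : h' ∈ V
          · exact mixed_eq hgood hXH hXV hh' hh'V hne'
          · exact (no_tri hgood hgen hXH hXV hh' hh'V hne' hmV hmH hneMX).elim
        exact neighbor_subset_V hgood hXH hXV hmV hneMX honlyH
    · have hmH : m.1 ∈ H := m.2.resolve_right hmV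
      have honlyV : ∀ v' ∈ V, (v' ∩ X).Nonempty → v' = X := by
        intro v' hv' hne'
        by_cases hv'H : v' ∈ H
        · exact mixed_eq hgood hXH hXV hv'H hv' hne'
        · exact (no_tri hgood hgen hXH hXV hmH hmV hneMX hv' hv'H hne').elim
      exact neighbor_subset_H hgood hXH hXV hmH hneMX honlyV
  have hstar : ∀ {u w : {B : Set (ℝ × ℝ) // B ∈ H ∪ V}} (W : (thetaGraph H V).Walk u w),
      (u = ⟨X, Or.inl hXH⟩ ∨ (thetaGraph H V).Adj ⟨X, Or.inl hXH⟩ u) →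
      (w = ⟨X, Or.inl hXH⟩ ∨ (thetaGraph H V).Adj ⟨X, Or.inl hXH⟩ w) := by
    intro u w W
    induction W with
    | nil => exact id
    | @cons u m w e W' ih =>
      intro hu
      apply ih
      by_cases hmXeq : m = ⟨X, Or.inl hXH⟩
      · exact Or.inl hmXeq
      · right
        rcases hu with rfl | hadj
        · exact e
        · have husub := hNBR u hadj
          obtain ⟨-, -, hneum⟩ := e
          have hmXne : (X ∩ m.1).Nonempty := by
            obtain ⟨z, hz⟩ := hneum
            exact ⟨z, husub hz.1, hz.2⟩
          refine ⟨fun hcon => hmXeq hcon.symm, ?_, hmXne⟩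
          rcases m.2 with hmH | hmV
          · exact Or.inr ⟨hXV, hmH⟩
          · exact Or.inl ⟨hXH, hmV⟩
  obtain ⟨W⟩ := hgood.conn.preconnected ⟨X, Or.inl hXH⟩ j
  rcases hstar W (Or.inl rfl) with rfl | hadj
  · rw [SimpleGraph.dist_self] at hj; omega
  · have hd1 : (thetaGraph H V).dist ⟨X, Or.inl hXH⟩ j ≤ 1 := by
      have := SimpleGraph.dist_le hadj.toWalk
      simpa using this
    omega

end Helpers

/-- Under the generic-points property, if `ôrad ≥ 3` then there is a point `p ∈ P` with
`rld(p,q) ≤ ôrad − 1` for every `q ∈ P`; consequently `rad(P) ≤ ôrad − 1`. -/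
theorem rldRad_le_oRad_sub_one (P : Set (ℝ × ℝ)) (H V : Set (Set (ℝ × ℝ)))
    (hgood : GoodDecomp P H V)
    (hgen : ∀ h ∈ H, ∀ v ∈ V, (h ∩ v).Nonempty →
      ∃ x ∈ h ∩ v, ∀ B ∈ H ∪ V, x ∈ B → B = h ∨ B = v)
    (hR : 3 ≤ oRadTheta H V) :
    (∃ p ∈ P, ∀ q ∈ P, rld P p q ≤ oRadTheta H V - 1) ∧
      rldRad P ≤ oRadTheta H V - 1 := by
  classical
  have hfinU : (H ∪ V).Finite := hgood.finH.union hgood.finV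
  haveI : Finite {B : Set (ℝ × ℝ) // B ∈ H ∪ V} := hfinU.to_subtype
  haveI hnev : Nonempty {B : Set (ℝ × ℝ) // B ∈ H ∪ V} := hgood.conn.nonempty
  have hbdd : ∀ i : {B : Set (ℝ × ℝ) // B ∈ H ∪ V},
      BddAbove {n : ℕ | ∃ j : {B : Set (ℝ × ℝ) // B ∈ H ∪ V}, oDist H V i j = n} := by
    intro i
    have : {n : ℕ | ∃ j : {B : Set (ℝ × ℝ) // B ∈ H ∪ V}, oDist H V i j = n}
        = Set.range (oDist H V i) := rfl
    rw [this]
    exact (Set.finite_range _).bddAbove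
  have hrad : oRadTheta H V = sInf {m : ℕ | ∃ i : {B : Set (ℝ × ℝ) // B ∈ H ∪ V},
      sSup {n : ℕ | ∃ j : {B : Set (ℝ × ℝ) // B ∈ H ∪ V}, oDist H V i j = n} = m} := rfl
  obtain ⟨i₀, hi₀⟩ : ∃ i : {B : Set (ℝ × ℝ) // B ∈ H ∪ V},
      sSup {n : ℕ | ∃ j : {B : Set (ℝ × ℝ) // B ∈ H ∪ V}, oDist H V i j = n}
        = oRadTheta H V := by
    rw [hrad]
    have hne : {m : ℕ | ∃ i : {B : Set (ℝ × ℝ) // B ∈ H ∪ V},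
        sSup {n : ℕ | ∃ j : {B : Set (ℝ × ℝ) // B ∈ H ∪ V}, oDist H V i j = n}
          = m}.Nonempty := by
      obtain ⟨i⟩ := hnev
      exact ⟨_, i, rfl⟩
    exact Nat.sInf_mem (s := {m : ℕ | ∃ i : {B : Set (ℝ × ℝ) // B ∈ H ∪ V},
      sSup {n : ℕ | ∃ j : {B : Set (ℝ × ℝ) // B ∈ H ∪ V}, oDist H V i j = n} = m}) hne
  have hub : ∀ j, (thetaGraph H V).dist i₀ j + 1 ≤ oRadTheta H V := by
    intro j
    have h1 : oDist H V i₀ j ≤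
        sSup {n : ℕ | ∃ j' : {B : Set (ℝ × ℝ) // B ∈ H ∪ V}, oDist H V i₀ j' = n} :=
      le_csSup (hbdd i₀) ⟨j, rfl⟩
    rw [hi₀] at h1
    exact h1
  have hlow : ∀ i : {B : Set (ℝ × ℝ) // B ∈ H ∪ V},
      ∃ j, 2 ≤ (thetaGraph H V).dist i j := by
    intro i
    have h1 : oRadTheta H V ≤
        sSup {n : ℕ | ∃ j : {B : Set (ℝ × ℝ) // B ∈ H ∪ V}, oDist H V i j = n} := by
      rw [hrad]
      exact Nat.sInf_le ⟨i, rfl⟩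
    obtain ⟨j, hj⟩ := Nat.sSup_mem (⟨oDist H V i i, i, rfl⟩ :
      {n : ℕ | ∃ j : {B : Set (ℝ × ℝ) // B ∈ H ∪ V}, oDist H V i j = n}.Nonempty) (hbdd i)
    refine ⟨j, ?_⟩
    have h3 : 3 ≤ oDist H V i j := by rw [hj]; exact hR.trans h1
    have h4 : 3 ≤ (thetaGraph H V).dist i j + 1 := h3
    omega
  have hdisj : ∀ B ∈ H, B ∉ V := no_mixed hgood hgen hlow
  obtain ⟨p₀, hp₀⟩ := (hgood.box _ i₀.2).nonempty
  have hp₀P : p₀ ∈ P := hgood.sub _ i₀.2 hp₀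
  have hR2 : 2 ≤ oRadTheta H V - 1 := by omega
  have key : ∀ q ∈ P, rld P p₀ q ≤ oRadTheta H V - 1 := by
    intro q hq
    obtain ⟨h, hh, hsh⟩ := hgood.covH q q rfl
      (by rw [segment_same]; simpa using hq)
    obtain ⟨v, hv, hsv⟩ := hgood.covV q q rfl
      (by rw [segment_same]; simpa using hq)
    have hqh : q ∈ h := hsh (left_mem_segment ℝ q q)
    have hqv : q ∈ v := hsv (left_mem_segment ℝ q q)
    have hhv : h ≠ v := fun e => hdisj h hh (e ▸ hv)
    have hadj : (thetaGraph H V).Adj ⟨h, Or.inl hh⟩ ⟨v, Or.inr hv⟩ :=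
      ⟨fun e => hhv (congrArg Subtype.val e), Or.inl ⟨hh, hv⟩, ⟨q, hqh, hqv⟩⟩
    have hdistne : (thetaGraph H V).dist i₀ ⟨h, Or.inl hh⟩ ≠
        (thetaGraph H V).dist i₀ ⟨v, Or.inr hv⟩ := by
      intro heq
      obtain ⟨W1, hW1⟩ := hgood.conn.exists_walk_length_eq_dist i₀ ⟨h, Or.inl hh⟩
      obtain ⟨W2, hW2⟩ := hgood.conn.exists_walk_length_eq_dist i₀ ⟨v, Or.inr hv⟩
      have p1 := walk_parity hdisj W1
      have p2 := walk_parity hdisj W2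
      rw [hW1, heq] at p1
      rw [hW2] at p2
      rw [← p2] at p1
      have hhV' : h ∉ V := hdisj h hh
      simp only [] at p1
      tauto
    have hle1 : (thetaGraph H V).dist i₀ ⟨h, Or.inl hh⟩ ≤ oRadTheta H V - 1 := by
      have := hub ⟨h, Or.inl hh⟩; omega
    have hle2 : (thetaGraph H V).dist i₀ ⟨v, Or.inr hv⟩ ≤ oRadTheta H V - 1 := by
      have := hub ⟨v, Or.inr hv⟩; omega
    obtain ⟨B, hqB, hdB⟩ : ∃ B : {B : Set (ℝ × ℝ) // B ∈ H ∪ V},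
        q ∈ B.1 ∧ (thetaGraph H V).dist i₀ B ≤ oRadTheta H V - 1 - 1 := by
      rcases Nat.lt_or_ge ((thetaGraph H V).dist i₀ ⟨h, Or.inl hh⟩)
        ((thetaGraph H V).dist i₀ ⟨v, Or.inr hv⟩) with hlt | hge
      · exact ⟨⟨h, Or.inl hh⟩, hqh, by omega⟩
      · have hlt : (thetaGraph H V).dist i₀ ⟨v, Or.inr hv⟩ <
            (thetaGraph H V).dist i₀ ⟨h, Or.inl hh⟩ :=
          lt_of_le_of_ne hge (fun e => hdistne e.symm)
        exact ⟨⟨v, Or.inr hv⟩, hqv, by omega⟩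
    rcases Nat.eq_zero_or_pos ((thetaGraph H V).dist i₀ B) with h0 | hpos
    · have hiB : i₀ = B := (hgood.conn.dist_eq_zero_iff).1 h0
      have hq0 : q ∈ i₀.1 := by rw [hiB]; exact hqB
      have hbox := hgood.box _ i₀.2
      have hmid : ((q.1, p₀.2) : ℝ × ℝ) ∈ i₀.1 :=
        mem_box_of_proj hbox ⟨q, hq0, rfl⟩ ⟨p₀, hp₀, rfl⟩
      obtain ⟨f, hf⟩ := rectPath_two hbox.convex hbox.convex
        (hgood.sub _ i₀.2) (hgood.sub _ i₀.2)
        hp₀ hmid hmid hq0 (Or.inl rfl) (Or.inr rfl)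
      have : rld P p₀ q ≤ 2 := by unfold rld; exact Nat.sInf_le ⟨f, hf⟩
      omega
    · obtain ⟨W, hW⟩ := hgood.conn.exists_walk_length_eq_dist i₀ B
      obtain ⟨f, hf⟩ := path_of_walk hgood W (by omega) p₀ hp₀ q hqB
      have : rld P p₀ q ≤ W.length + 1 := by unfold rld; exact Nat.sInf_le ⟨f, hf⟩
      omega
  refine ⟨⟨p₀, hp₀P, key⟩, ?_⟩
  have hne2 : {n : ℕ | ∃ q ∈ P, rld P p₀ q = n}.Nonempty := ⟨_, p₀, hp₀P, rfl⟩
  have hsup_le : sSup {n : ℕ | ∃ q ∈ P, rld P p₀ q = n} ≤ oRadTheta H V - 1 := by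
    apply csSup_le hne2
    rintro n ⟨q, hq, rfl⟩
    exact key q hq
  calc rldRad P ≤ sSup {n : ℕ | ∃ q ∈ P, rld P p₀ q = n} := by
        unfold rldRad; exact Nat.sInf_le ⟨p₀, hp₀P, rfl⟩
    _ ≤ _ := hsup_le
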